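/- arXiv:1208.2360 — 4 statements merged into one kernel-verified Lean document; each statement's English description precedes it below -/
import Mathlib

section
/- Let F, G, H be groupoids, let X : Gᵒᵖ × F ⥤ Type be such that for every object γ of G the F-set X(γ, -) : F ⥤ Type is free and finite, and let Y : Hᵒᵖ × G ⥤ Type be such that for every object η of H the G-set Y(η, -) : G ⥤ Type is free and finite. Then for every object η of H, the F-set φ ↦ (coend over γ ∈ G of X(γ, φ) × Y(η, γ)) is free and finite. -/
open CategoryTheory Opposite

universe w v₁ v₂ v₃ u₁ u₂ u₃

namespace BiSet

variable {A : Type u₁} {B : Type u₂} [Groupoid.{v₁} A] [Groupoid.{v₂} B]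
variable (X : Aᵒᵖ × B ⥤ Type w)

/-- The left (covariant) action `x ↦ g • x` of a bi-set `X : Aᵒᵖ × B ⥤ Type`. -/
def lAct {b b' : B} (g : b ⟶ b') (a : A) : X.obj (op a, b) → X.obj (op a, b') :=
  X.map ((𝟙 (op a), g) : (op a, b) ⟶ (op a, b'))

/-- The right (contravariant) action `x ↦ x • h` of a bi-set `X : Aᵒᵖ × B ⥤ Type`. -/
def rAct {a' a : A} (h : a' ⟶ a) (b : B) : X.obj (op a, b) → X.obj (op a', b) :=
  X.map ((h.op, 𝟙 b) : (op a, b) ⟶ (op a', b))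

variable {X}

theorem lAct_id {b : B} (a : A) (x : X.obj (op a, b)) : lAct X (𝟙 b) a x = x := by
  show X.map (𝟙 (op a, b)) x = x
  simp

theorem rAct_id {a : A} (b : B) (x : X.obj (op a, b)) : rAct X (𝟙 a) b x = x := by
  show X.map (𝟙 (op a, b)) x = x
  simp

theorem lAct_comp {b b' b'' : B} (g : b ⟶ b') (g' : b' ⟶ b'') (a : A)
    (x : X.obj (op a, b)) : lAct X (g ≫ g') a x = lAct X g' a (lAct X g a x) := by
  unfold lAct
  rw [← FunctorToTypes.map_comp_apply, prod_comp]
  simp only [Category.comp_id]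

theorem rAct_comp {a a' a'' : A} (h : a ⟶ a') (h' : a' ⟶ a'') (b : B)
    (x : X.obj (op a'', b)) : rAct X (h ≫ h') b x = rAct X h b (rAct X h' b x) := by
  unfold rAct
  rw [← FunctorToTypes.map_comp_apply, prod_comp]
  simp only [Category.comp_id, op_comp]

theorem lAct_rAct {b b' : B} {a' a : A} (g : b ⟶ b') (h : a' ⟶ a) (x : X.obj (op a, b)) :
    lAct X g a' (rAct X h b x) = rAct X h b' (lAct X g a x) := by
  unfold lAct rAct
  rw [← FunctorToTypes.map_comp_apply, ← FunctorToTypes.map_comp_apply, prod_comp, prod_comp]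
  simp

end BiSet

/-- Freeness for a `Type`-valued functor: all orbit maps `g ↦ g • x` are injective. -/
def GSetFree {C : Type u} [Category.{v} C] (T : C ⥤ Type w') : Prop :=
  ∀ ⦃c c' : C⦄ (x : T.obj c), Function.Injective fun g : c ⟶ c' => T.map g x

/-- The relation on `Σ c, T c` whose quotient is the colimit of `T` in `Type`. -/
def ColimRel {C : Type u} [Category.{v} C] (T : C ⥤ Type w') :
    (Σ c : C, T.obj c) → (Σ c : C, T.obj c) → Prop :=
  fun x y => ∃ g : x.1 ⟶ y.1, T.map g x.2 = y.2

/-- Finiteness for a `Type`-valued functor: its colimit in `Type` is a finite set. -/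
def GSetFinite {C : Type u} [Category.{v} C] (T : C ⥤ Type w') : Prop :=
  Finite (Quot (ColimRel T))

section Composition

variable {F : Type u₁} {G : Type u₂} {H : Type u₃}
  [Groupoid.{v₁} F] [Groupoid.{v₂} G] [Groupoid.{v₃} H]

/-- The relation on `Σ γ, X(γ, φ) × Y(η, γ)` generated by `(x • g, y) ~ (x, g • y)`; its
quotient is the coend `(X ×_G Y)(η, φ)` defining the composite of the bi-sets `X` and `Y`. -/
def BiSetCompRel (X : Gᵒᵖ × F ⥤ Type w) (Y : Hᵒᵖ × G ⥤ Type w) (η : H) (φ : F) :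
    (Σ γ : G, X.obj (op γ, φ) × Y.obj (op η, γ)) →
      (Σ γ : G, X.obj (op γ, φ) × Y.obj (op η, γ)) → Prop :=
  fun a b => ∃ g : a.1 ⟶ b.1,
    a.2.1 = BiSet.rAct X g φ b.2.1 ∧ b.2.2 = BiSet.lAct Y g η a.2.2

/-- For fixed `η`, the composite `F`-set `φ ↦ (X ×_G Y)(η, φ)`, the coend over `γ ∈ G` of
`X(γ, φ) × Y(η, γ)`, with `F` acting through its action on `X`. -/
def compGSet (X : Gᵒᵖ × F ⥤ Type w) (Y : Hᵒᵖ × G ⥤ Type w) (η : H) :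
    F ⥤ Type (max u₂ w) where
  obj φ := Quot (BiSetCompRel X Y η φ)
  map {φ φ'} f :=
    TypeCat.ofHom (Quot.map
      (fun a => (⟨a.1, (BiSet.lAct X f a.1 a.2.1, a.2.2)⟩ :
        Σ γ : G, X.obj (op γ, φ') × Y.obj (op η, γ)))
      (by
        rintro ⟨γa, x, y⟩ ⟨γb, x', y'⟩ ⟨g, hx, hy⟩
        refine ⟨g, ?_, hy⟩
        dsimp at *
        rw [hx, BiSet.lAct_rAct]) :
      Quot (BiSetCompRel X Y η φ) → Quot (BiSetCompRel X Y η φ'))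
  map_id φ := by
    ext z
    induction z using Quot.ind with
    | _ a =>
      show Quot.mk _ _ = Quot.mk _ _
      simp [BiSet.lAct_id]
  map_comp f g := by
    ext z
    induction z using Quot.ind with
    | _ a =>
      show Quot.mk _ _ = Quot.mk _ _
      simp [BiSet.lAct_comp]

section Aux

theorem colimRel_equivalence {C : Type u} [Groupoid.{v} C] (T : C ⥤ Type w') :
    Equivalence (ColimRel T) where
  refl a := ⟨𝟙 a.1, by simp [FunctorToTypes.map_id_apply]⟩
  symm := by
    rintro ⟨c, x⟩ ⟨c', y⟩ ⟨g, h⟩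
    exact ⟨Groupoid.inv g, by
      rw [← h, ← FunctorToTypes.map_comp_apply]; simp [FunctorToTypes.map_id_apply]⟩
  trans := by
    rintro ⟨c, x⟩ ⟨c', y⟩ ⟨c'', z⟩ ⟨g, h⟩ ⟨g', h'⟩
    exact ⟨g ≫ g', by rw [FunctorToTypes.map_comp_apply, h, h']⟩

theorem colimRel_of_mk_eq {C : Type u} [Groupoid.{v} C] {T : C ⥤ Type w'}
    {a b : Σ c : C, T.obj c} (h : Quot.mk (ColimRel T) a = Quot.mk (ColimRel T) b) :
    ColimRel T a b :=
  ((colimRel_equivalence T).eqvGen_iff).mp (Quot.eq.mp h)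

variable {F : Type u₁} {G : Type u₂} {H : Type u₃}
  [Groupoid.{v₁} F] [Groupoid.{v₂} G] [Groupoid.{v₃} H]

theorem compRel_equivalence (X : Gᵒᵖ × F ⥤ Type w) (Y : Hᵒᵖ × G ⥤ Type w) (η : H) (φ : F) :
    Equivalence (BiSetCompRel X Y η φ) where
  refl a := ⟨𝟙 a.1, by simp [BiSet.rAct_id, BiSet.lAct_id]⟩
  symm := by
    rintro ⟨γ, x, y⟩ ⟨γ', x', y'⟩ ⟨g, hx, hy⟩
    refine ⟨Groupoid.inv g, ?_, ?_⟩
    · dsimp only at *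
      rw [hx, ← BiSet.rAct_comp, Groupoid.inv_comp, BiSet.rAct_id]
    · dsimp only at *
      rw [hy, ← BiSet.lAct_comp, Groupoid.comp_inv, BiSet.lAct_id]
  trans := by
    rintro ⟨γa, x, y⟩ ⟨γb, x', y'⟩ ⟨γc, x'', y''⟩ ⟨g, hx, hy⟩ ⟨g', hx', hy'⟩
    refine ⟨g ≫ g', ?_, ?_⟩
    · dsimp only at *
      rw [hx, hx', BiSet.rAct_comp]
    · dsimp only at *
      rw [hy', hy, BiSet.lAct_comp]

theorem compRel_of_mk_eq {X : Gᵒᵖ × F ⥤ Type w} {Y : Hᵒᵖ × G ⥤ Type w} {η : H} {φ : F}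
    {a b : Σ γ : G, X.obj (op γ, φ) × Y.obj (op η, γ)}
    (h : Quot.mk (BiSetCompRel X Y η φ) a = Quot.mk (BiSetCompRel X Y η φ) b) :
    BiSetCompRel X Y η φ a b :=
  ((compRel_equivalence X Y η φ).eqvGen_iff).mp (Quot.eq.mp h)

theorem curry_map_eq_lAct (X : Gᵒᵖ × F ⥤ Type w) (γ : G) {φ φ' : F} (f : φ ⟶ φ')
    (x : X.obj (op γ, φ)) :
    ((Functor.curry.obj X).obj (op γ)).map f x = BiSet.lAct X f γ x := rfl

theorem curryY_map_eq_lAct (Y : Hᵒᵖ × G ⥤ Type w) (η : H) {γ γ' : G} (g : γ ⟶ γ')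
    (y : Y.obj (op η, γ)) :
    ((Functor.curry.obj Y).obj (op η)).map g y = BiSet.lAct Y g η y := rfl

end Aux

/-- If `X(γ, -)` is a free and finite `F`-set for every `γ` and `Y(η, -)` is a free and
finite `G`-set for every `η`, then the composite `F`-set `(X ×_G Y)(η, -)` is free and
finite for every `η`. -/
theorem compGSet_free_and_finite (X : Gᵒᵖ × F ⥤ Type w) (Y : Hᵒᵖ × G ⥤ Type w)
    (hXfree : ∀ γ : G, GSetFree ((Functor.curry.obj X).obj (op γ)))
    (hXfin : ∀ γ : G, GSetFinite ((Functor.curry.obj X).obj (op γ)))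
    (hYfree : ∀ η : H, GSetFree ((Functor.curry.obj Y).obj (op η)))
    (hYfin : ∀ η : H, GSetFinite ((Functor.curry.obj Y).obj (op η)))
    (η : H) :
    GSetFree (compGSet X Y η) ∧ GSetFinite (compGSet X Y η) := by
  constructor
  · -- freeness
    intro φ φ' z
    induction z using Quot.ind with
    | _ a =>
      obtain ⟨γ, x, y⟩ := a
      intro f₁ f₂ h
      have h' : Quot.mk (BiSetCompRel X Y η φ') ⟨γ, (BiSet.lAct X f₁ γ x, y)⟩ =
          Quot.mk (BiSetCompRel X Y η φ') ⟨γ, (BiSet.lAct X f₂ γ x, y)⟩ := h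
      obtain ⟨g, hx, hy⟩ := compRel_of_mk_eq h'
      dsimp only at hx hy
      have hg : g = 𝟙 γ := by
        apply hYfree η y
        show BiSet.lAct Y g η y = BiSet.lAct Y (𝟙 γ) η y
        rw [BiSet.lAct_id, ← hy]
      subst hg
      rw [BiSet.rAct_id] at hx
      apply hXfree γ x
      show BiSet.lAct X f₁ γ x = BiSet.lAct X f₂ γ x
      exact hx
  · -- finiteness
    have hq : ∀ q : Quot (ColimRel ((Functor.curry.obj Y).obj (op η))),
        Finite (Quot (ColimRel ((Functor.curry.obj X).obj (op q.out.1)))) := fun q => hXfin q.out.1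
    haveI : Finite (Quot (ColimRel ((Functor.curry.obj Y).obj (op η)))) := hYfin η
    haveI := hq
    set T := Σ q : Quot (ColimRel ((Functor.curry.obj Y).obj (op η))),
      Quot (ColimRel ((Functor.curry.obj X).obj (op q.out.1))) with hT
    haveI : Finite T := Finite.instSigma
    refine Finite.of_surjective (α := T)
      (fun t => Quot.mk _ ⟨t.2.out.1,
        Quot.mk _ ⟨t.1.out.1, (t.2.out.2, t.1.out.2)⟩⟩) ?_
    intro c
    induction c using Quot.ind with
    | _ a =>
      obtain ⟨φ, z⟩ := a
      induction z using Quot.ind with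
      | _ b =>
        obtain ⟨γ, x, y⟩ := b
        -- pick the class of (γ, y) in the colimit of Y(η, -)
        set q : Quot (ColimRel ((Functor.curry.obj Y).obj (op η))) :=
          Quot.mk _ ⟨γ, y⟩ with hqdef
        obtain ⟨g, hg⟩ : ColimRel ((Functor.curry.obj Y).obj (op η)) ⟨γ, y⟩ q.out :=
          colimRel_of_mk_eq (by rw [q.out_eq])
        -- move x to live over q.out.1
        set x₀ : X.obj (op q.out.1, φ) := BiSet.rAct X (Groupoid.inv g) φ x with hx₀
        set p : Quot (ColimRel ((Functor.curry.obj X).obj (op q.out.1))) :=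
          Quot.mk _ ⟨φ, x₀⟩ with hpdef
        obtain ⟨f, hf⟩ : ColimRel ((Functor.curry.obj X).obj (op q.out.1)) p.out ⟨φ, x₀⟩ :=
          colimRel_of_mk_eq (by rw [p.out_eq])
        refine ⟨⟨q, p⟩, ?_⟩
        dsimp only
        -- first, apply f to relate the p.out representative to (φ, x₀)
        have step1 : Quot.mk (ColimRel (compGSet X Y η))
            ⟨p.out.1, Quot.mk _ ⟨q.out.1, (p.out.2, q.out.2)⟩⟩ =
            Quot.mk (ColimRel (compGSet X Y η))
            ⟨φ, Quot.mk _ ⟨q.out.1, (x₀, q.out.2)⟩⟩ := by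
          apply Quot.sound
          refine ⟨f, ?_⟩
          show Quot.mk (BiSetCompRel X Y η φ) ⟨q.out.1, (BiSet.lAct X f q.out.1 p.out.2, q.out.2)⟩ = _
          rw [show BiSet.lAct X f q.out.1 p.out.2 = x₀ from hf]
        rw [step1]
        -- now relate (q.out.1, x₀, q.out.2) to (γ, x, y) via g
        congr 1
        apply congrArg (fun w => (⟨φ, w⟩ : Σ φ' : F, Quot (BiSetCompRel X Y η φ')))
        apply (Quot.sound _).symm
        refine ⟨g, ?_, ?_⟩
        · show x = BiSet.rAct X g φ x₀
          rw [hx₀, ← BiSet.rAct_comp, Groupoid.comp_inv, BiSet.rAct_id]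
        · exact hg.symm

end Composition
end

section
/- Let K, L, G be groupoids, p : L ⥤ G a functor, and m : K ⥤ G a finite weak cover. Then the projection functor from the bicategorical pullback K ×_G L (the comma category whose objects are triples (λ, κ, g : p λ → m κ) and whose morphisms (λ', κ', g') → (λ, κ, g) are pairs (l : λ' → λ, k : κ' → κ) with m(k) ∘ g' = g ∘ p(l)) to L, sending (λ, κ, g) to λ, is a finite weak cover. -/
open CategoryTheory

/-- A functor is a *finite weak cover* if each of its homotopy fibers (structured-arrow
categories) is thin and has finitely many connected components. -/
def FiniteWeakCover {K : Type u₁} {G : Type u₂} [Category.{v₁} K] [Category.{v₂} G]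
    (m : K ⥤ G) : Prop :=
  ∀ γ : G, Quiver.IsThin (StructuredArrow γ m) ∧
    Finite (ConnectedComponents (StructuredArrow γ m))

section Aux

variable {K : Type u₁} {L : Type u₂} {G : Type u₃}
    [Groupoid.{v₁} K] [Groupoid.{v₂} L] [Groupoid.{v₃} G]
    (p : L ⥤ G) (m : K ⥤ G) (l₀ : L)

/-- Compare the fiber of the pullback with the fiber of `m`. -/
def fiberCompare : StructuredArrow l₀ (Comma.fst p m) ⥤ StructuredArrow (p.obj l₀) m where
  obj Y := StructuredArrow.mk (p.map Y.hom ≫ Y.right.hom)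
  map {Y Z} φ := StructuredArrow.homMk φ.right.right (by
    have h : Y.hom ≫ φ.right.left = Z.hom := by
      simpa using StructuredArrow.w φ
    have hc := φ.right.w
    dsimp at hc ⊢
    rw [Category.assoc, ← hc, ← Category.assoc, ← p.map_comp, h])
  map_id Y := by ext; simp
  map_comp φ ψ := by ext; simp

/-- The section of `fiberCompare` on objects. -/
def fiberSection : StructuredArrow (p.obj l₀) m ⥤ StructuredArrow l₀ (Comma.fst p m) where
  obj A := StructuredArrow.mk (Y := (⟨l₀, A.right, A.hom⟩ : Comma p m)) (𝟙 l₀)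
  map {A B} ψ := StructuredArrow.homMk
    { left := 𝟙 l₀
      right := ψ.right
      w := by simp [StructuredArrow.w ψ] } (by aesop_cat)
  map_id A := by ext <;> simp
  map_comp φ ψ := by ext <;> simp

end Aux

/-- The bicategorical pullback of a finite weak cover `m : K ⥤ G` along any functor
`p : L ⥤ G` of groupoids, i.e. the projection `Comma p m ⥤ L`, is a finite weak cover. -/
theorem finiteWeakCover_pullback
    {K : Type u₁} {L : Type u₂} {G : Type u₃}
    [Groupoid.{v₁} K] [Groupoid.{v₂} L] [Groupoid.{v₃} G]
    (p : L ⥤ G) (m : K ⥤ G) (hm : FiniteWeakCover m) :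
    FiniteWeakCover (Comma.fst p m) := by
  intro l₀
  obtain ⟨hthin, hfin⟩ := hm (p.obj l₀)
  constructor
  · -- thinness
    intro Y Z
    constructor
    intro φ ψ
    have h1 : (fiberCompare p m l₀).map φ = (fiberCompare p m l₀).map ψ :=
      (hthin _ _).elim _ _
    have h2 : φ.right.right = ψ.right.right := by
      have := congrArg CommaMorphism.right h1
      simpa [fiberCompare] using this
    have hφ : Y.hom ≫ φ.right.left = Z.hom := by simpa using StructuredArrow.w φ
    have hψ : Y.hom ≫ ψ.right.left = Z.hom := by simpa using StructuredArrow.w ψ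
    have h3 : φ.right.left = ψ.right.left := by
      have := hφ.trans hψ.symm
      exact (cancel_epi Y.hom).mp this
    ext
    · exact h3
    · exact h2
  · -- finiteness of connected components
    apply Finite.of_surjective ((fiberSection p m l₀).mapConnectedComponents)
    intro x
    obtain ⟨Y, rfl⟩ := Quotient.exists_rep x
    refine ⟨Quotient.mk _ ((fiberCompare p m l₀).obj Y), ?_⟩
    rw [Functor.mapConnectedComponents_mk]
    apply Quotient.sound
    refine Zigzag.of_hom
      { left := 𝟙 _
        right := { left := Y.hom, right := 𝟙 _, w := ?_ }
        w := ?_ }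
    · simp [fiberSection, fiberCompare]
    · simp [fiberSection, fiberCompare]
end

section
/- If q' : M ⥤ K and q : K ⥤ G are finite weak covers of groupoids, then the composite q ∘ q' : M ⥤ G is a finite weak cover. -/
open CategoryTheory

private lemma sa_nonempty_hom_of_zigzag {K : Type u₂} {G : Type u₃}
    [Groupoid.{v₂} K] [Groupoid.{v₃} G] (q : K ⥤ G) (γ : G)
    {a b : StructuredArrow γ q} (h : Zigzag a b) : Nonempty (a ⟶ b) := by
  induction h with
  | refl => exact ⟨𝟙 a⟩
  | tail _ hzag ih =>
      obtain ⟨f⟩ := ih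
      rcases hzag with ⟨⟨g⟩⟩ | ⟨⟨g⟩⟩
      · exact ⟨f ≫ g⟩
      · refine ⟨f ≫ StructuredArrow.homMk (inv g.right) ?_⟩
        rw [← StructuredArrow.w g]
        simp

/-- The composite of finite weak covers of groupoids is a finite weak cover. -/
theorem finiteWeakCover_comp
    {M : Type u₁} {K : Type u₂} {G : Type u₃}
    [Groupoid.{v₁} M] [Groupoid.{v₂} K] [Groupoid.{v₃} G]
    (q' : M ⥤ K) (q : K ⥤ G) (hq' : FiniteWeakCover q') (hq : FiniteWeakCover q) :
    FiniteWeakCover (q' ⋙ q) := by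
  intro γ
  constructor
  · -- thinness
    intro A B
    refine ⟨fun f g => ?_⟩
    have h1 : (StructuredArrow.homMk (q'.map f.right) (StructuredArrow.w f) :
        (StructuredArrow.mk A.hom : StructuredArrow γ q) ⟶ StructuredArrow.mk B.hom) =
        StructuredArrow.homMk (q'.map g.right) (StructuredArrow.w g) :=
      @Subsingleton.elim _ ((hq γ).1 _ _) _ _
    have h1'' := congrArg CommaMorphism.right h1
    have h1' : q'.map f.right = q'.map g.right := h1''
    have h2 : (StructuredArrow.homMk f.right (by simp) :
        (StructuredArrow.mk (𝟙 (q'.obj A.right)) : StructuredArrow (q'.obj A.right) q') ⟶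
          StructuredArrow.mk (q'.map f.right)) =
        (StructuredArrow.homMk g.right (by simp [← h1']) :
        (StructuredArrow.mk (𝟙 (q'.obj A.right)) : StructuredArrow (q'.obj A.right) q') ⟶
          StructuredArrow.mk (q'.map f.right)) :=
      @Subsingleton.elim _ ((hq' (q'.obj A.right)).1 _ _) _ _
    have h2'' := congrArg CommaMorphism.right h2
    have h2' : f.right = g.right := h2''
    exact StructuredArrow.hom_ext f g h2'
  · -- finiteness
    haveI : Finite (ConnectedComponents (StructuredArrow γ q)) := (hq γ).2
    haveI : ∀ c : ConnectedComponents (StructuredArrow γ q),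
        Finite (ConnectedComponents (StructuredArrow (Quotient.out c).right q')) :=
      fun c => (hq' _).2
    refine Finite.of_surjective
      (fun p : Σ c : ConnectedComponents (StructuredArrow γ q),
          ConnectedComponents (StructuredArrow (Quotient.out c).right q') =>
        (Quotient.mk _ (StructuredArrow.mk ((Quotient.out p.1).hom ≫
          q.map (Quotient.out p.2).hom)) :
          ConnectedComponents (StructuredArrow γ (q' ⋙ q)))) ?_
    -- surjectivity
    intro x
    obtain ⟨X, rfl⟩ := Quotient.exists_rep x
    -- component of (q' X.right, X.hom) in the fiber of q
    set c : ConnectedComponents (StructuredArrow γ q) :=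
      Quotient.mk _ (StructuredArrow.mk (X.hom) : StructuredArrow γ q) with hc
    have hz : Zigzag (Quotient.out c) (StructuredArrow.mk (X.hom) : StructuredArrow γ q) :=
      Quotient.exact (Quotient.out_eq c)
    obtain ⟨k⟩ := sa_nonempty_hom_of_zigzag q γ hz
    set d : ConnectedComponents (StructuredArrow (Quotient.out c).right q') :=
      Quotient.mk _ (StructuredArrow.mk k.right) with hd
    have hz' : Zigzag (Quotient.out d)
        (StructuredArrow.mk k.right : StructuredArrow (Quotient.out c).right q') :=
      Quotient.exact (Quotient.out_eq d)
    obtain ⟨j⟩ := sa_nonempty_hom_of_zigzag q' _ hz'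
    refine ⟨⟨c, d⟩, ?_⟩
    refine Quotient.sound (Zigzag.of_hom ?_)
    refine StructuredArrow.homMk j.right ?_
    have hk : (Quotient.out c).hom ≫ q.map k.right = X.hom := StructuredArrow.w k
    have hj : (Quotient.out d).hom ≫ q'.map j.right = k.right := StructuredArrow.w j
    show ((Quotient.out c).hom ≫ q.map (Quotient.out d).hom) ≫ q.map (q'.map j.right) = X.hom
    rw [Category.assoc, ← q.map_comp, hj, hk]
end

section
/- Let H be a category, F : H ⥤ Cat a functor, and η₀ an object of H. The canonical functor from F.obj η₀ to the homotopy fiber over η₀ of the forgetful functor π : Grothendieck F ⥤ H — sending an object φ of F.obj η₀ to the pair (⟨η₀, φ⟩, 𝟙_{η₀}) and a morphism f : φ' → φ to the morphism induced by (𝟙_{η₀}, f) — is fully faithful; and if H is a groupoid, it is an equivalence of categories. -/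
open CategoryTheory

/-- The canonical functor from the fiber `F.obj η₀` of `F : H ⥤ Cat` to the homotopy fiber
over `η₀` of the forgetful functor `Grothendieck F ⥤ H`, sending `φ` to `(⟨η₀, φ⟩, 𝟙 η₀)`
and `f : φ' ⟶ φ` to the morphism induced by `(𝟙 η₀, f)`. -/
def fiberToHomotopyFiber {H : Type u} [Category.{v} H] (F : H ⥤ Cat.{v₂, u₂}) (η₀ : H) :
    F.obj η₀ ⥤ StructuredArrow η₀ (Grothendieck.forget F) :=
  (Grothendieck.ι F η₀).toStructuredArrow η₀ (Grothendieck.forget F)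
    (fun _ => 𝟙 η₀) (fun _ => by simp [Grothendieck.ι] <;> first | exact Category.id_comp _ | erw [Category.id_comp])

/-- The canonical functor from the fiber of `F : H ⥤ Cat` over `η₀` to the homotopy fiber of
the forgetful functor `Grothendieck F ⥤ H` over `η₀` is fully faithful; and if `H` is a
groupoid (every morphism is invertible), it is an equivalence of categories. -/
theorem fiberToHomotopyFiber_fullyFaithful_and_isEquivalence
    {H : Type u} [Category.{v} H] (F : H ⥤ Cat.{v₂, u₂}) (η₀ : H) :
    (fiberToHomotopyFiber F η₀).Full ∧ (fiberToHomotopyFiber F η₀).Faithful ∧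
    ((∀ ⦃η η' : H⦄ (h : η ⟶ η'), IsIso h) → (fiberToHomotopyFiber F η₀).IsEquivalence) := by
  have hfaith : (fiberToHomotopyFiber F η₀).Faithful := by
    constructor
    intro φ' φ f g hfg
    apply (Grothendieck.ι F η₀).map_injective
    have := congrArg CommaMorphism.right hfg
    exact this
  have hfull : (fiberToHomotopyFiber F η₀).Full := by
    constructor
    intro φ' φ g
    have hbase : g.right.base = 𝟙 η₀ := (Category.id_comp _).symm.trans g.w
    refine ⟨eqToHom (by rw [hbase]; erw [CategoryTheory.Functor.map_id]; rfl) ≫ g.right.fiber, ?_⟩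
    ext
    apply Grothendieck.ext _ _ (by exact hbase.symm)
    dsimp only [fiberToHomotopyFiber, Functor.toStructuredArrow, StructuredArrow.homMk, Grothendieck.ι]
    erw [eqToHom_trans_assoc, eqToHom_trans_assoc, eqToHom_refl, Category.id_comp]
  refine ⟨hfull, hfaith, fun hiso => ?_⟩
  have : (fiberToHomotopyFiber F η₀).EssSurj := by
    constructor
    intro s
    haveI := hiso s.hom
    refine ⟨(F.map (inv s.hom)).toFunctor.obj s.right.fiber, ⟨StructuredArrow.isoMk ?_ ?_⟩⟩
    · refine ⟨⟨s.hom, eqToHom ?h1⟩, ⟨@inv _ _ _ _ s.hom (hiso _), 𝟙 _⟩, ?_, ?_⟩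
      case h1 =>
        show (F.map s.hom).toFunctor.obj ((F.map (inv s.hom)).toFunctor.obj s.right.fiber) = s.right.fiber
        rw [show (F.map s.hom).toFunctor.obj ((F.map (inv s.hom)).toFunctor.obj s.right.fiber)
            = (F.map (inv s.hom) ≫ F.map s.hom).toFunctor.obj s.right.fiber from rfl,
          ← F.map_comp, IsIso.inv_hom_id, F.map_id]
        rfl
      · apply Grothendieck.ext _ _ (by exact IsIso.hom_inv_id _)
        simp [eqToHom_map]
        erw [Category.comp_id, eqToHom_trans, eqToHom_trans]
      · apply Grothendieck.ext _ _ (by exact @IsIso.inv_hom_id _ _ _ _ s.hom (hiso _))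
        simp [eqToHom_map]
        erw [(F.map s.hom).toFunctor.map_id, Category.id_comp, eqToHom_trans, eqToHom_trans]
    · exact Category.id_comp _
  exact { }
end
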